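/- arXiv:2205.13454 — 3 statements merged into one kernel-verified Lean document; each statement's English description precedes it below -/
import Mathlib

section
/- Define the binary Pascal map M : F₂ⁿ → F₂ⁿ⁻¹ by (M v)_i = v_i + v_{i+1} (addition mod 2). Then iterating: for a string of length n = 2^x + 1 with first entry A and last entry B, the single entry obtained after n−1 applications of M equals A ⊕ B. -/
/-- One step of the binary Pascal map: `(M v)_i = v_i + v_{i+1}` over `F₂`. -/
def pascalStep {k : ℕ} (v : Fin (k + 1) → ZMod 2) : Fin k → ZMod 2 :=
  fun i => v i.castSucc + v i.succ

/-- Iterating the Pascal map all the way down to a single bit. -/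
def pascalIter : (k : ℕ) → (Fin (k + 1) → ZMod 2) → ZMod 2
  | 0, v => v 0
  | k + 1, v => pascalIter k (pascalStep v)

lemma pascalIter_eq : ∀ (k : ℕ) (v : Fin (k + 1) → ZMod 2),
    pascalIter k v = ∑ i : Fin (k + 1), (k.choose i : ZMod 2) * v i
  | 0, v => by simp [pascalIter]
  | k + 1, v => by
    rw [pascalIter, pascalIter_eq k]
    simp only [pascalStep, mul_add, Finset.sum_add_distrib]
    rw [Fin.sum_univ_succ (fun i : Fin (k + 2) => ((k+1).choose i : ZMod 2) * v i)]
    simp only [Nat.choose_succ_succ, Nat.cast_add, add_mul, Finset.sum_add_distrib,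
      Fin.val_succ, Fin.val_zero, Nat.choose_zero_right, Nat.cast_one, one_mul]
    rw [Fin.sum_univ_succ (fun i : Fin (k + 1) => (k.choose i : ZMod 2) * v i.castSucc),
      Fin.sum_univ_castSucc (fun i : Fin (k + 1) => (k.choose (i + 1) : ZMod 2) * v i.succ)]
    simp [Fin.succ_castSucc, Nat.choose_succ_self, -Fin.castSucc_succ]
    ring

/-- For a binary string of length `n = 2^x + 1`, the single entry obtained after
`n − 1` applications of the Pascal map equals the XOR of the first and last entries. -/
theorem pascalIter_pow_two_add_one (x : ℕ) (v : Fin (2 ^ x + 1) → ZMod 2) :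
    pascalIter (2 ^ x) v = v 0 + v (Fin.last (2 ^ x)) := by
  rw [pascalIter_eq]
  rw [Finset.sum_eq_add_of_mem (0 : Fin (2 ^ x + 1)) (Fin.last (2 ^ x))
    (Finset.mem_univ _) (Finset.mem_univ _)
    (by simp [Fin.ext_iff, (pow_ne_zero x two_ne_zero).symm])
    ?_]
  · simp [Fin.val_last]
  · intro c _ hc
    have h2 : (2 : ℕ) ∣ (2 ^ x).choose c := by
      refine Nat.Prime.dvd_choose_pow Nat.prime_two ?_ ?_
      · exact fun h => hc.1 (Fin.ext (by rw [h]; simp))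
      · intro h
        exact hc.2 (by simp [Fin.ext_iff, Fin.val_last, h])
    have : ((2 ^ x).choose c : ZMod 2) = 0 := by
      rwa [ZMod.natCast_eq_zero_iff]
    simp [this]
end

section
/- With T : F₂ⁿ → F₂ⁿ the linear map (T v)_i = v_i + v_{i+1} (indices in lexicographic order, (T v)_{n−1} = v_{n−1}), the orbit under T of the standard basis vector e_{2^{⌊log₂ n⌋}−1} (the string with a single 1 in position 2^{⌊log₂ n⌋}−1, zero-indexed) has period exactly 2^{⌊log₂ n⌋}, and exactly one element of this orbit has a 1 in its first entry. -/
/-- The shifted-addition ("CNOT ladder") map on length-`n` binary strings: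
`(T v)_i = v_i + v_{i+1}` for `i < n − 1`, and `(T v)_{n−1} = v_{n−1}`. -/
def ladderMap {n : ℕ} (v : Fin n → ZMod 2) : Fin n → ZMod 2 :=
  fun i => if h : (i : ℕ) + 1 < n then v i + v ⟨(i : ℕ) + 1, h⟩ else v i

lemma ladder_iter {n : ℕ} (m : ℕ) (hmn : m ≤ n) (hm1 : 1 ≤ m) (k : ℕ) :
    (ladderMap (n := n))^[k] (fun i => if (i : ℕ) = m - 1 then 1 else 0) =
      fun i : Fin n =>
        if (i : ℕ) ≤ m - 1 then ((Nat.choose k (m - 1 - (i : ℕ)) : ZMod 2)) else 0 := by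
  induction k with
  | zero =>
      funext i
      simp only [Function.iterate_zero, id_eq]
      by_cases h : (i : ℕ) = m - 1
      · simp [h]
      · by_cases h2 : (i : ℕ) ≤ m - 1
        · have h3 : 0 < m - 1 - (i : ℕ) := by omega
          simp [h, h2, Nat.choose_eq_zero_of_lt h3]
        · simp [h, h2]
  | succ k ih =>
      rw [Function.iterate_succ_apply', ih]
      funext i
      simp only [ladderMap]
      by_cases hlt : (i : ℕ) + 1 < n
      · simp only [dif_pos hlt]
        by_cases h1 : (i : ℕ) ≤ m - 1
        · by_cases h2 : (i : ℕ) = m - 1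
          · have h3 : ¬ ((i : ℕ) + 1 ≤ m - 1) := by omega
            have h4 : m - 1 - (i : ℕ) = 0 := by omega
            simp [h1, h2, h3, h4]
          · have h3 : (i : ℕ) + 1 ≤ m - 1 := by omega
            have hs : m - 1 - (i : ℕ) = (m - 1 - ((i : ℕ) + 1)) + 1 := by omega
            simp only [if_pos h1, if_pos h3]
            rw [hs, Nat.choose_succ_succ]
            push_cast
            ring
        · have h3 : ¬ ((i : ℕ) + 1 ≤ m - 1) := by omega
          simp [h1, h3]
      · simp only [dif_neg hlt]
        by_cases h1 : (i : ℕ) ≤ m - 1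
        · have h4 : m - 1 - (i : ℕ) = 0 := by have := i.isLt; omega
          simp [h1, h4]
        · simp [h1]

/-- The orbit of the standard basis vector `e_{2^{⌊log₂ n⌋}−1}` under `T` has period
exactly `2^{⌊log₂ n⌋}`, and exactly one element of this orbit has a `1` in its first
entry. -/
theorem ladderMap_basis_orbit (n : ℕ) (hn : 2 ≤ n) :
    let v : Fin n → ZMod 2 := fun i => if (i : ℕ) = 2 ^ Nat.log 2 n - 1 then 1 else 0
    ((ladderMap (n := n))^[2 ^ Nat.log 2 n] v = v ∧
        ∀ q, 0 < q → q < 2 ^ Nat.log 2 n → (ladderMap (n := n))^[q] v ≠ v) ∧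
      ((Finset.range (2 ^ Nat.log 2 n)).filter
          (fun k => ((ladderMap (n := n))^[k] v) ⟨0, by omega⟩ = 1)).card = 1 := by
  intro v
  set t := Nat.log 2 n with ht
  set m := 2 ^ t with hm
  have hmn : m ≤ n := Nat.pow_log_le_self 2 (by omega)
  have ht1 : 1 ≤ t := by
    exact Nat.log_pos (by norm_num) hn
  have hm2 : 2 ≤ m := by
    calc (2 : ℕ) = 2 ^ 1 := by norm_num
    _ ≤ 2 ^ t := Nat.pow_le_pow_right (by norm_num) ht1
  have hm1 : 1 ≤ m := by omega
  have key := ladder_iter (n := n) m hmn hm1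
  refine ⟨⟨?_, ?_⟩, ?_⟩
  · -- period m
    rw [key m]
    funext i
    show _ = v i
    by_cases h1 : (i : ℕ) ≤ m - 1
    · by_cases h2 : (i : ℕ) = m - 1
      · have h4 : m - 1 - (i : ℕ) = 0 := by omega
        simp [v, ← ht, ← hm, h1, h2, h4]
      · have hne0 : m - 1 - (i : ℕ) ≠ 0 := by omega
        have hnem : m - 1 - (i : ℕ) ≠ m := by omega
        have hdvd : (2 : ℕ) ∣ m.choose (m - 1 - (i : ℕ)) :=
          Nat.Prime.dvd_choose_pow Nat.prime_two hne0 hnem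
        have : ((m.choose (m - 1 - (i : ℕ)) : ℕ) : ZMod 2) = 0 :=
          (ZMod.natCast_eq_zero_iff _ _).mpr hdvd
        simp [v, ← ht, ← hm, h1, h2, this]
    · have h2 : ¬ (i : ℕ) = m - 1 := by omega
      simp [v, ← ht, ← hm, h1, h2]
  · -- no smaller period
    intro q hq0 hqm heq
    have hidx : m - 1 - q < n := by omega
    have := congrFun heq ⟨m - 1 - q, hidx⟩
    rw [key q] at this
    have h1 : m - 1 - q ≤ m - 1 := by omega
    have h2 : ¬ (m - 1 - q = m - 1) := by omega
    have h4 : m - 1 - (m - 1 - q) = q := by omega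
    simp only [v, ← ht, ← hm, if_pos h1, if_neg h2, h4, Nat.choose_self, Nat.cast_one] at this
    exact one_ne_zero this
  · -- exactly one element with first entry 1
    have hset : ((Finset.range m).filter
        (fun k => ((ladderMap (n := n))^[k] v) ⟨0, by omega⟩ = 1)) = {m - 1} := by
      ext k
      simp only [Finset.mem_filter, Finset.mem_range, Finset.mem_singleton]
      constructor
      · rintro ⟨hk, hval⟩
        by_contra hne
        have hklt : k < m - 1 := by omega
        rw [key k] at hval
        have h1 : (0 : ℕ) ≤ m - 1 := by omega
        simp only [if_pos h1, Nat.sub_zero, Nat.choose_eq_zero_of_lt hklt,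
          Nat.cast_zero] at hval
        exact zero_ne_one hval
      · rintro rfl
        refine ⟨by omega, ?_⟩
        rw [key (m - 1)]
        have h1 : (0 : ℕ) ≤ m - 1 := by omega
        simp [if_pos h1]
    rw [hset]
    simp
end

section
/- Let A be an n_A-qubit subsystem and consider the channel Ũ = D ∘ U_L ∘ D ∘ … ∘ D ∘ U_1 consisting of L unitary layers on A interleaved with instances of local depolarizing noise D = D_p^{⊗n_A} on all qubits of A. For any traceless operator M on A⊗B that is a linear combination of Pauli strings each acting nontrivially on A, ‖(Ũ ⊗ I_B)(M)‖₂ ≤ (1−p)^L ‖M‖₂. -/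
open Matrix

noncomputable def frobNorm {m : Type*} [Fintype m] (A : Matrix m m ℂ) : ℝ :=
  Real.sqrt ((Matrix.trace (Aᴴ * A)).re)

def PX : Matrix (Fin 2) (Fin 2) ℂ := !![0, 1; 1, 0]
noncomputable def PY : Matrix (Fin 2) (Fin 2) ℂ := !![0, -Complex.I; Complex.I, 0]
def PZ : Matrix (Fin 2) (Fin 2) ℂ := !![1, 0; 0, -1]

noncomputable def pauliFactor : Fin 4 → Matrix (Fin 2) (Fin 2) ℂ
  | 0 => 1
  | 1 => PX
  | 2 => PY
  | 3 => PZ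

abbrev QMat (ι : Type*) := Matrix (ι → Fin 2) (ι → Fin 2) ℂ

/-- The Pauli tensor-product string with factor `σ_{f k}` on qubit `k`. -/
noncomputable def pauliStr {ι : Type*} [Fintype ι] (f : ι → Fin 4) : QMat ι :=
  fun i j => ∏ k, pauliFactor (f k) (i k) (j k)

/-- Replace qubit `a` by the maximally mixed state `I/2`. -/
noncomputable def replaceQ {ι : Type*} [Fintype ι] [DecidableEq ι] (a : ι) (A : QMat ι) : QMat ι :=
  fun i j => if i a = j a then
      (1 / 2 : ℂ) * ∑ b : Fin 2, A (Function.update i a b) (Function.update j a b)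
    else 0

/-- Single-qubit depolarizing channel with probability `p` on qubit `a`. -/
noncomputable def depolQ {ι : Type*} [Fintype ι] [DecidableEq ι] (p : ℝ) (a : ι) (A : QMat ι) :
    QMat ι :=
  ((1 : ℂ) - (p : ℂ)) • A + (p : ℂ) • replaceQ a A

/-- Local depolarizing noise `D_p^{⊗n_A}` on every qubit of subsystem `A`. -/
noncomputable def depolA {nA nB : ℕ} (p : ℝ) (M : QMat (Fin nA ⊕ Fin nB)) :
    QMat (Fin nA ⊕ Fin nB) :=
  (List.finRange nA).foldl (fun B (a : Fin nA) => depolQ p (Sum.inl a) B) M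

/-- Extension `U ⊗ I_B` of a unitary on subsystem `A` to the joint system. -/
noncomputable def extA {nA nB : ℕ} (U : QMat (Fin nA)) : QMat (Fin nA ⊕ Fin nB) :=
  fun i j => U (i ∘ Sum.inl) (j ∘ Sum.inl) * (if (i ∘ Sum.inr) = (j ∘ Sum.inr) then 1 else 0)

/-- The noisy evolution `Ũ ⊗ I_B = (D∘U_L∘D∘…∘D∘U_1) ⊗ I_B`: `L` unitary layers on `A`
interleaved with local depolarizing noise on all qubits of `A`. -/
noncomputable def tildeU {nA nB L : ℕ} (p : ℝ) (U : Fin L → QMat (Fin nA))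
    (M : QMat (Fin nA ⊕ Fin nB)) : QMat (Fin nA ⊕ Fin nB) :=
  (List.finRange L).foldl
    (fun B (k : Fin L) => depolA p (extA (U k) * B * (extA (U k) : QMat (Fin nA ⊕ Fin nB))ᴴ)) M

open Matrix Finset

lemma pauli2_trace (m m' : Fin 4) :
    ∑ a : Fin 2, ∑ b : Fin 2, pauliFactor m a b * pauliFactor m' b a
      = if m = m' then 2 else 0 := by
  fin_cases m <;> fin_cases m' <;>
    simp [pauliFactor, PX, PY, PZ, Fin.sum_univ_two, Matrix.one_apply, Complex.ext_iff] <;> norm_num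

lemma pauli2_diag (m : Fin 4) :
    ∑ b : Fin 2, pauliFactor m b b = if m = 0 then 2 else 0 := by
  fin_cases m <;> simp [pauliFactor, PX, PY, PZ, Fin.sum_univ_two, Matrix.one_apply]

lemma pauliFactor_conjTranspose (m : Fin 4) : (pauliFactor m)ᴴ = pauliFactor m := by
  fin_cases m <;>
  · ext a b
    fin_cases a <;> fin_cases b <;>
      simp [pauliFactor, PX, PY, PZ, Matrix.conjTranspose_apply, Matrix.one_apply]
lemma pauliStr_trace_mul {ι : Type*} [Fintype ι] [DecidableEq ι] (f g : ι → Fin 4) :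
    Matrix.trace (pauliStr f * pauliStr g)
      = if f = g then (2:ℂ)^(Fintype.card ι) else 0 := by
  set H : ι → Fin 2 × Fin 2 → ℂ :=
    fun k ab => pauliFactor (f k) ab.1 ab.2 * pauliFactor (g k) ab.2 ab.1 with hH
  have h1 : Matrix.trace (pauliStr f * pauliStr g)
      = ∑ x : (ι → Fin 2) × (ι → Fin 2), ∏ k, H k (x.1 k, x.2 k) := by
    rw [Matrix.trace, Fintype.sum_prod_type]
    simp only [Matrix.diag, Matrix.mul_apply, pauliStr, ← Finset.prod_mul_distrib, hH]
  have h15 : ∑ x : (ι → Fin 2) × (ι → Fin 2), ∏ k, H k (x.1 k, x.2 k)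
      = ∑ q : ι → Fin 2 × Fin 2, ∏ k, H k (q k) :=
    (Fintype.sum_equiv (Equiv.arrowProdEquivProdArrow ι (fun _ => Fin 2) (fun _ => Fin 2))
      _ _ (fun q => Finset.prod_congr rfl fun k _ => rfl)).symm
  have h3 : ∑ q : ι → Fin 2 × Fin 2, ∏ k, H k (q k) = ∏ k, ∑ ab : Fin 2 × Fin 2, H k ab :=
    (Fintype.prod_sum H).symm
  rw [h1, h15, h3]
  have h4 : ∀ k, (∑ ab : Fin 2 × Fin 2, H k ab) = if f k = g k then 2 else 0 := by
    intro k; rw [Fintype.sum_prod_type]; exact pauli2_trace (f k) (g k)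
  simp only [h4]
  by_cases h : f = g
  · subst h; simp
  · rw [if_neg h]
    obtain ⟨k, hk⟩ := Function.ne_iff.mp h
    exact Finset.prod_eq_zero (Finset.mem_univ k) (if_neg hk)
lemma pauliStr_conjTranspose {ι : Type*} [Fintype ι] (f : ι → Fin 4) :
    (pauliStr f)ᴴ = pauliStr f := by
  funext i j
  rw [Matrix.conjTranspose_apply, pauliStr, pauliStr, star_prod]
  refine Finset.prod_congr rfl fun k _ => ?_
  have := congrFun (congrFun (pauliFactor_conjTranspose (f k)) (i k)) (j k)
  rw [Matrix.conjTranspose_apply] at this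
  exact this

lemma replaceQ_pauliStr {ι : Type*} [Fintype ι] [DecidableEq ι] (a : ι) (f : ι → Fin 4) :
    replaceQ a (pauliStr f) = if f a = 0 then pauliStr f else 0 := by
  have key : ∀ i j : ι → Fin 2, ∀ b : Fin 2,
      pauliStr f (Function.update i a b) (Function.update j a b)
      = pauliFactor (f a) b b * ∏ k ∈ Finset.univ.erase a, pauliFactor (f k) (i k) (j k) := by
    intro i j b
    rw [pauliStr, ← Finset.mul_prod_erase Finset.univ _ (Finset.mem_univ a)]
    rw [Function.update_self, Function.update_self]
    congr 1
    refine Finset.prod_congr rfl fun k hk => ?_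
    rw [Function.update_of_ne (Finset.ne_of_mem_erase hk),
      Function.update_of_ne (Finset.ne_of_mem_erase hk)]
  funext i j
  have hsum : (1 / 2 : ℂ) * ∑ b : Fin 2,
      pauliStr f (Function.update i a b) (Function.update j a b)
      = (if f a = 0 then 1 else 0) * ∏ k ∈ Finset.univ.erase a, pauliFactor (f k) (i k) (j k) := by
    simp only [key, ← Finset.sum_mul, pauli2_diag]
    split <;> ring
  have hps : pauliStr f i j
      = pauliFactor (f a) (i a) (j a) * ∏ k ∈ Finset.univ.erase a,
          pauliFactor (f k) (i k) (j k) := by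
    rw [pauliStr, ← Finset.mul_prod_erase Finset.univ _ (Finset.mem_univ a)]
  by_cases h : f a = 0
  · rw [if_pos h]
    show (if i a = j a then _ else (0:ℂ)) = _
    rw [hps, h]
    by_cases hij : i a = j a
    · rw [if_pos hij, hsum, if_pos h]
      simp [pauliFactor, Matrix.one_apply, hij]
    · rw [if_neg hij]
      simp [pauliFactor, Matrix.one_apply, hij]
  · rw [if_neg h]
    show (if i a = j a then _ else (0:ℂ)) = _
    rw [hsum, if_neg h]
    simp

lemma replaceQ_smul {ι : Type*} [Fintype ι] [DecidableEq ι] (a : ι) (z : ℂ) (A : QMat ι) :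
    replaceQ a (z • A) = z • replaceQ a A := by
  funext i j
  show (if i a = j a then _ else (0:ℂ)) = z * (if i a = j a then _ else (0:ℂ))
  split
  · simp only [Matrix.smul_apply, smul_eq_mul, Finset.mul_sum]
    exact Finset.sum_congr rfl fun b _ => by ring
  · ring

lemma replaceQ_add {ι : Type*} [Fintype ι] [DecidableEq ι] (a : ι) (A B : QMat ι) :
    replaceQ a (A + B) = replaceQ a A + replaceQ a B := by
  funext i j
  show (if i a = j a then _ else (0:ℂ))
      = (if i a = j a then _ else (0:ℂ)) + (if i a = j a then _ else (0:ℂ))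
  split
  · simp only [Matrix.add_apply, Finset.sum_add_distrib]; ring
  · ring

lemma depolQ_smul {ι : Type*} [Fintype ι] [DecidableEq ι] (p : ℝ) (a : ι) (z : ℂ) (A : QMat ι) :
    depolQ p a (z • A) = z • depolQ p a A := by
  rw [depolQ, depolQ, replaceQ_smul, smul_add, smul_comm ((1:ℂ) - (p:ℂ)) z, smul_comm (p:ℂ) z]

lemma depolQ_add {ι : Type*} [Fintype ι] [DecidableEq ι] (p : ℝ) (a : ι) (A B : QMat ι) :
    depolQ p a (A + B) = depolQ p a A + depolQ p a B := by
  rw [depolQ, depolQ, depolQ, replaceQ_add, smul_add, smul_add]; abel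

lemma depolQ_pauliStr {ι : Type*} [Fintype ι] [DecidableEq ι] (p : ℝ) (a : ι) (f : ι → Fin 4) :
    depolQ p a (pauliStr f)
      = (if f a = 0 then (1:ℂ) else (1 - (p:ℂ))) • pauliStr f := by
  rw [depolQ, replaceQ_pauliStr]
  split
  · rw [← add_smul]
    norm_num
  · rw [smul_zero, add_zero]
lemma foldl_depolQ_smul {nA nB : ℕ} (p : ℝ) (l : List (Fin nA)) (z : ℂ)
    (A : QMat (Fin nA ⊕ Fin nB)) :
    l.foldl (fun B a => depolQ p (Sum.inl a) B) (z • A)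
      = z • l.foldl (fun B a => depolQ p (Sum.inl a) B) A := by
  induction l generalizing A with
  | nil => rfl
  | cons a t ih => rw [List.foldl_cons, List.foldl_cons, depolQ_smul, ih]

lemma foldl_depolQ_pauliStr {nA nB : ℕ} (p : ℝ) (l : List (Fin nA))
    (f : Fin nA ⊕ Fin nB → Fin 4) :
    l.foldl (fun B a => depolQ p (Sum.inl a) B) (pauliStr f)
      = ((l.map (fun a => if f (Sum.inl a) = 0 then (1:ℝ) else (1 - p))).prod : ℂ)
          • pauliStr f := by
  induction l with
  | nil => simp
  | cons a t ih =>
    rw [List.foldl_cons, depolQ_pauliStr, foldl_depolQ_smul, ih, smul_smul,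
      List.map_cons, List.prod_cons]
    push_cast
    congr 1
    split <;> simp

/-- the real contraction factor of `depolA` on a Pauli string -/
noncomputable def dR {nA nB : ℕ} (p : ℝ) (f : Fin nA ⊕ Fin nB → Fin 4) : ℝ :=
  ∏ a : Fin nA, (if f (Sum.inl a) = 0 then (1:ℝ) else (1 - p))

lemma depolA_pauliStr {nA nB : ℕ} (p : ℝ) (f : Fin nA ⊕ Fin nB → Fin 4) :
    depolA p (pauliStr f) = ((dR p f : ℝ) : ℂ) • pauliStr f := by
  rw [depolA, foldl_depolQ_pauliStr, dR, Fin.prod_univ_def]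

lemma dR_nonneg {nA nB : ℕ} {p : ℝ} (hp1 : p ≤ 1) (f : Fin nA ⊕ Fin nB → Fin 4) :
    0 ≤ dR p f :=
  Finset.prod_nonneg fun a _ => by split <;> [norm_num; linarith]

lemma dR_le_one {nA nB : ℕ} {p : ℝ} (hp0 : 0 ≤ p) (hp1 : p ≤ 1)
    (f : Fin nA ⊕ Fin nB → Fin 4) : dR p f ≤ 1 :=
  Finset.prod_le_one (fun a _ => by split <;> [norm_num; linarith])
    (fun a _ => by split <;> [norm_num; linarith])

lemma dR_le {nA nB : ℕ} {p : ℝ} (hp0 : 0 ≤ p) (hp1 : p ≤ 1)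
    {f : Fin nA ⊕ Fin nB → Fin 4} (hf : ∃ a, f (Sum.inl a) ≠ 0) :
    dR p f ≤ 1 - p := by
  obtain ⟨a0, ha0⟩ := hf
  rw [dR, ← Finset.mul_prod_erase Finset.univ _ (Finset.mem_univ a0), if_neg ha0]
  calc (1 - p) * ∏ a ∈ Finset.univ.erase a0, (if f (Sum.inl a) = 0 then (1:ℝ) else 1 - p)
      ≤ (1 - p) * 1 := by
        refine mul_le_mul_of_nonneg_left ?_ (by linarith)
        exact Finset.prod_le_one (fun a _ => by split <;> [norm_num; linarith])
          (fun a _ => by split <;> [norm_num; linarith])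
    _ = 1 - p := mul_one _

lemma foldl_depolQ_add {nA nB : ℕ} (p : ℝ) (l : List (Fin nA))
    (A B : QMat (Fin nA ⊕ Fin nB)) :
    l.foldl (fun C a => depolQ p (Sum.inl a) C) (A + B)
      = l.foldl (fun C a => depolQ p (Sum.inl a) C) A
        + l.foldl (fun C a => depolQ p (Sum.inl a) C) B := by
  induction l generalizing A B with
  | nil => rfl
  | cons a t ih => rw [List.foldl_cons, List.foldl_cons, List.foldl_cons, depolQ_add, ih]

lemma depolA_zero {nA nB : ℕ} (p : ℝ) : depolA p (0 : QMat (Fin nA ⊕ Fin nB)) = 0 := by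
  rw [depolA]
  generalize (List.finRange nA) = l
  induction l with
  | nil => rfl
  | cons a t ih =>
    rw [List.foldl_cons]
    have h0 : depolQ p (Sum.inl a) (0 : QMat (Fin nA ⊕ Fin nB)) = 0 := by
      simpa using depolQ_smul p (Sum.inl a : Fin nA ⊕ Fin nB) 0 (0 : QMat (Fin nA ⊕ Fin nB))
    rw [h0, ih]

lemma depolA_sum {nA nB : ℕ} (p : ℝ) {α : Type*} (s : Finset α)
    (F : α → QMat (Fin nA ⊕ Fin nB)) :
    depolA p (∑ x ∈ s, F x) = ∑ x ∈ s, depolA p (F x) := by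
  classical
  induction s using Finset.induction with
  | empty => simpa using depolA_zero (nA := nA) (nB := nB) p
  | insert _ _ hx ih =>
    rw [Finset.sum_insert hx, Finset.sum_insert hx, ← ih, depolA, depolA, depolA,
      foldl_depolQ_add]
lemma trace_pauliStr_sum {ι : Type*} [Fintype ι] [DecidableEq ι]
    (c : (ι → Fin 4) → ℂ) (g : ι → Fin 4) :
    Matrix.trace (pauliStr g * ∑ f, c f • pauliStr f)
      = (2:ℂ)^(Fintype.card ι) * c g := by
  rw [Matrix.mul_sum, Matrix.trace_sum]
  simp only [Matrix.mul_smul, Matrix.trace_smul, pauliStr_trace_mul, smul_eq_mul]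
  rw [Finset.sum_eq_single g]
  · rw [if_pos rfl]; ring
  · intro f _ hfg; rw [if_neg (Ne.symm hfg), mul_zero]
  · intro h; exact absurd (Finset.mem_univ g) h

lemma parseval {ι : Type*} [Fintype ι] [DecidableEq ι] (c : (ι → Fin 4) → ℂ) :
    (Matrix.trace ((∑ f, c f • pauliStr f)ᴴ * (∑ f, c f • pauliStr f))).re
      = 2^(Fintype.card ι) * ∑ f, Complex.normSq (c f) := by
  have h1 : (∑ f, c f • pauliStr (ι := ι) f)ᴴ = ∑ f, star (c f) • pauliStr f := by
    rw [Matrix.conjTranspose_sum]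
    exact Finset.sum_congr rfl fun f _ => by
      rw [Matrix.conjTranspose_smul, pauliStr_conjTranspose]
  rw [h1, Finset.sum_mul, Matrix.trace_sum]
  have h2 : ∀ f, Matrix.trace ((star (c f) • pauliStr (ι := ι) f) * ∑ g, c g • pauliStr g)
      = star (c f) * ((2:ℂ)^(Fintype.card ι) * c f) := by
    intro f
    rw [Matrix.smul_mul, Matrix.trace_smul, trace_pauliStr_sum, smul_eq_mul]
  simp only [h2]
  have h3 : ∀ f : ι → Fin 4, star (c f) * ((2:ℂ)^(Fintype.card ι) * c f)
      = (2:ℂ)^(Fintype.card ι) * ((Complex.normSq (c f) : ℝ) : ℂ) := by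
    intro f
    rw [Complex.star_def]
    have h : (starRingEnd ℂ) (c f) * ((2:ℂ)^(Fintype.card ι) * c f)
        = (2:ℂ)^(Fintype.card ι) * ((starRingEnd ℂ) (c f) * c f) := by ring
    rw [h, ← Complex.normSq_eq_conj_mul_self]
  simp only [h3]
  rw [← Finset.mul_sum, ← Complex.ofReal_sum,
    show ((2:ℂ)^(Fintype.card ι)) = (((2:ℝ)^(Fintype.card ι) : ℝ) : ℂ) by push_cast; ring,
    ← Complex.ofReal_mul, Complex.ofReal_re]
lemma funSum_eq_iff {nA nB : ℕ} {i j : Fin nA ⊕ Fin nB → Fin 2} :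
    i = j ↔ i ∘ Sum.inl = j ∘ Sum.inl ∧ i ∘ Sum.inr = j ∘ Sum.inr := by
  constructor
  · rintro rfl; exact ⟨rfl, rfl⟩
  · rintro ⟨h1, h2⟩
    funext k
    cases k with
    | inl a => exact congrFun h1 a
    | inr b => exact congrFun h2 b

lemma extA_mul {nA nB : ℕ} (U W : QMat (Fin nA)) :
    (extA U * extA W : QMat (Fin nA ⊕ Fin nB)) = extA (U * W) := by
  funext i j
  rw [Matrix.mul_apply,
    ← Equiv.sum_comp (Equiv.sumArrowEquivProdArrow (Fin nA) (Fin nB) (Fin 2)).symm,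
    Fintype.sum_prod_type]
  have key : ∀ (kA : Fin nA → Fin 2) (kB : Fin nB → Fin 2),
      extA (nB := nB) U i ((Equiv.sumArrowEquivProdArrow (Fin nA) (Fin nB) (Fin 2)).symm (kA, kB))
        * extA (nB := nB) W ((Equiv.sumArrowEquivProdArrow (Fin nA) (Fin nB) (Fin 2)).symm (kA, kB)) j
      = (U (i ∘ Sum.inl) kA * W kA (j ∘ Sum.inl))
        * ((if (i ∘ Sum.inr) = kB then 1 else 0) * (if kB = (j ∘ Sum.inr) then 1 else 0)) := by
    intro kA kB
    have hl : (Equiv.sumArrowEquivProdArrow (Fin nA) (Fin nB) (Fin 2)).symm (kA, kB) ∘ Sum.inl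
        = kA := rfl
    have hr : (Equiv.sumArrowEquivProdArrow (Fin nA) (Fin nB) (Fin 2)).symm (kA, kB) ∘ Sum.inr
        = kB := rfl
    simp only [extA, hl, hr]
    ring
  simp only [key]
  rw [Finset.sum_comm]
  have step1 : ∀ y : Fin nB → Fin 2,
      (∑ x : Fin nA → Fin 2, U (i ∘ Sum.inl) x * W x (j ∘ Sum.inl)
        * ((if i ∘ Sum.inr = y then (1:ℂ) else 0) * if y = j ∘ Sum.inr then 1 else 0))
      = (U * W) (i ∘ Sum.inl) (j ∘ Sum.inl)
        * ((if i ∘ Sum.inr = y then (1:ℂ) else 0) * if y = j ∘ Sum.inr then 1 else 0) := by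
    intro y
    rw [← Finset.sum_mul, ← Matrix.mul_apply]
  rw [Finset.sum_congr rfl fun y _ => step1 y, ← Finset.mul_sum]
  have step2 : ∀ y : Fin nB → Fin 2,
      ((if i ∘ Sum.inr = y then (1:ℂ) else 0) * if y = j ∘ Sum.inr then 1 else 0)
      = if y = j ∘ Sum.inr then (if i ∘ Sum.inr = y then (1:ℂ) else 0) else 0 := by
    intro y
    by_cases h : y = j ∘ Sum.inr
    · rw [if_pos h, if_pos h, mul_one]
    · rw [if_neg h, if_neg h, mul_zero]
  rw [Finset.sum_congr rfl fun y _ => step2 y,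
    Finset.sum_ite_eq' Finset.univ (j ∘ Sum.inr) (fun y => if i ∘ Sum.inr = y then (1:ℂ) else 0),
    if_pos (Finset.mem_univ _)]
  rfl

lemma extA_one {nA nB : ℕ} : (extA 1 : QMat (Fin nA ⊕ Fin nB)) = 1 := by
  funext i j
  rw [extA, Matrix.one_apply, Matrix.one_apply]
  by_cases h : i = j
  · subst h; simp
  · rw [if_neg h]
    rcases (not_and_or.mp (fun hh => h (funSum_eq_iff.mpr hh))) with h1 | h1
    · rw [if_neg h1, zero_mul]
    · rw [if_neg h1, mul_zero]

lemma extA_conjTranspose {nA nB : ℕ} (U : QMat (Fin nA)) :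
    (extA U : QMat (Fin nA ⊕ Fin nB))ᴴ = extA Uᴴ := by
  funext i j
  rw [Matrix.conjTranspose_apply, extA, extA, Matrix.conjTranspose_apply, star_mul']
  congr 1
  by_cases h : j ∘ Sum.inr = i ∘ Sum.inr
  · rw [if_pos h, if_pos h.symm, star_one]
  · rw [if_neg h, if_neg (fun hh => h hh.symm), star_zero]
noncomputable def pauliB {nA nB : ℕ} (f : Fin nA ⊕ Fin nB → Fin 4)
    (x y : Fin nB → Fin 2) : ℂ :=
  ∏ b, pauliFactor (f (Sum.inr b)) (x b) (y b)

lemma pauliStr_trivial {nA nB : ℕ} {f : Fin nA ⊕ Fin nB → Fin 4}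
    (hf : ∀ a, f (Sum.inl a) = 0) (i j : Fin nA ⊕ Fin nB → Fin 2) :
    pauliStr f i j
      = (if i ∘ Sum.inl = j ∘ Sum.inl then 1 else 0) * pauliB f (i ∘ Sum.inr) (j ∘ Sum.inr) := by
  rw [pauliStr, Fintype.prod_sum_type]
  congr 1
  have h1 : ∀ a : Fin nA, pauliFactor (f (Sum.inl a)) (i (Sum.inl a)) (j (Sum.inl a))
      = if i (Sum.inl a) = j (Sum.inl a) then 1 else 0 := by
    intro a; rw [hf a]; exact Matrix.one_apply
  rw [Finset.prod_congr rfl fun a _ => h1 a]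
  by_cases h : i ∘ Sum.inl = j ∘ Sum.inl
  · rw [if_pos h]
    exact Finset.prod_eq_one fun a _ => if_pos (congrFun h a)
  · rw [if_neg h]
    obtain ⟨a, ha⟩ := Function.ne_iff.mp h
    exact Finset.prod_eq_zero (Finset.mem_univ a) (if_neg ha)

lemma extA_comm_pauliStr {nA nB : ℕ} (U : QMat (Fin nA)) {f : Fin nA ⊕ Fin nB → Fin 4}
    (hf : ∀ a, f (Sum.inl a) = 0) :
    extA (nB := nB) U * pauliStr f = pauliStr f * extA U := by
  funext i j
  have e := (Equiv.sumArrowEquivProdArrow (Fin nA) (Fin nB) (Fin 2)).symm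
  rw [Matrix.mul_apply, Matrix.mul_apply,
    ← Equiv.sum_comp (Equiv.sumArrowEquivProdArrow (Fin nA) (Fin nB) (Fin 2)).symm,
    ← Equiv.sum_comp (Equiv.sumArrowEquivProdArrow (Fin nA) (Fin nB) (Fin 2)).symm,
    Fintype.sum_prod_type, Fintype.sum_prod_type]
  have keyL : ∀ (kA : Fin nA → Fin 2) (kB : Fin nB → Fin 2),
      extA (nB := nB) U i ((Equiv.sumArrowEquivProdArrow (Fin nA) (Fin nB) (Fin 2)).symm (kA, kB))
        * pauliStr f ((Equiv.sumArrowEquivProdArrow (Fin nA) (Fin nB) (Fin 2)).symm (kA, kB)) j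
      = (if kA = j ∘ Sum.inl then U (i ∘ Sum.inl) (j ∘ Sum.inl)
          * ((if (i ∘ Sum.inr) = kB then 1 else 0)
          * pauliB f kB (j ∘ Sum.inr)) else 0) := by
    intro kA kB
    rw [pauliStr_trivial hf]
    have hl : (Equiv.sumArrowEquivProdArrow (Fin nA) (Fin nB) (Fin 2)).symm (kA, kB) ∘ Sum.inl
        = kA := rfl
    have hr : (Equiv.sumArrowEquivProdArrow (Fin nA) (Fin nB) (Fin 2)).symm (kA, kB) ∘ Sum.inr
        = kB := rfl
    simp only [extA, hl, hr]
    by_cases h : kA = j ∘ Sum.inl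
    · rw [if_pos h, if_pos h, h]; ring
    · rw [if_neg h, if_neg h]; ring
  have keyR : ∀ (kA : Fin nA → Fin 2) (kB : Fin nB → Fin 2),
      pauliStr f i ((Equiv.sumArrowEquivProdArrow (Fin nA) (Fin nB) (Fin 2)).symm (kA, kB))
        * extA (nB := nB) U ((Equiv.sumArrowEquivProdArrow (Fin nA) (Fin nB) (Fin 2)).symm (kA, kB)) j
      = (if kA = i ∘ Sum.inl then U (i ∘ Sum.inl) (j ∘ Sum.inl)
          * ((if kB = (j ∘ Sum.inr) then 1 else 0)
          * pauliB f (i ∘ Sum.inr) kB) else 0) := by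
    intro kA kB
    rw [pauliStr_trivial hf]
    have hl : (Equiv.sumArrowEquivProdArrow (Fin nA) (Fin nB) (Fin 2)).symm (kA, kB) ∘ Sum.inl
        = kA := rfl
    have hr : (Equiv.sumArrowEquivProdArrow (Fin nA) (Fin nB) (Fin 2)).symm (kA, kB) ∘ Sum.inr
        = kB := rfl
    simp only [extA, hl, hr]
    by_cases h : kA = i ∘ Sum.inl
    · rw [if_pos h, if_pos ((Eq.comm).mp h), h]; ring
    · rw [if_neg h, if_neg (fun hh => h hh.symm)]; ring
  rw [Finset.sum_congr rfl fun kA _ => Finset.sum_congr rfl fun kB _ => keyL kA kB,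
    Finset.sum_congr rfl fun kA _ => Finset.sum_congr rfl fun kB _ => keyR kA kB]
  have collapse : ∀ (c : Fin nA → Fin 2) (G : (Fin nB → Fin 2) → ℂ),
      (∑ kA : Fin nA → Fin 2, ∑ kB : Fin nB → Fin 2, (if kA = c then G kB else 0))
      = ∑ kB : Fin nB → Fin 2, G kB := by
    intro c G
    have h1 : ∀ kA : Fin nA → Fin 2, (∑ kB : Fin nB → Fin 2, if kA = c then G kB else 0)
        = if kA = c then (∑ kB : Fin nB → Fin 2, G kB) else 0 := by
      intro kA; split
      · rfl
      · exact Finset.sum_const_zero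
    rw [Finset.sum_congr rfl fun kA _ => h1 kA,
      Finset.sum_ite_eq' Finset.univ c (fun _ => ∑ kB : Fin nB → Fin 2, G kB),
      if_pos (Finset.mem_univ _)]
  rw [collapse, collapse]
  have stepL : ∀ kB : Fin nB → Fin 2,
      U (i ∘ Sum.inl) (j ∘ Sum.inl) * ((if (i ∘ Sum.inr) = kB then (1:ℂ) else 0)
        * pauliB f kB (j ∘ Sum.inr))
      = if kB = i ∘ Sum.inr then
          U (i ∘ Sum.inl) (j ∘ Sum.inl) * pauliB f kB (j ∘ Sum.inr) else 0 := by
    intro kB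
    by_cases h : kB = i ∘ Sum.inr
    · rw [if_pos h, if_pos ((Eq.comm).mp h)]; ring
    · rw [if_neg h, if_neg (fun hh => h hh.symm)]; ring
  have stepR : ∀ kB : Fin nB → Fin 2,
      U (i ∘ Sum.inl) (j ∘ Sum.inl) * ((if kB = (j ∘ Sum.inr) then (1:ℂ) else 0)
        * pauliB f (i ∘ Sum.inr) kB)
      = if kB = j ∘ Sum.inr then
          U (i ∘ Sum.inl) (j ∘ Sum.inl) * pauliB f (i ∘ Sum.inr) kB else 0 := by
    intro kB
    by_cases h : kB = j ∘ Sum.inr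
    · rw [if_pos h, if_pos h]; ring
    · rw [if_neg h, if_neg h]; ring
  rw [Finset.sum_congr rfl fun kB _ => stepL kB, Finset.sum_congr rfl fun kB _ => stepR kB,
    Finset.sum_ite_eq' Finset.univ (i ∘ Sum.inr)
      (fun kB => U (i ∘ Sum.inl) (j ∘ Sum.inl) * pauliB f kB (j ∘ Sum.inr)),
    Finset.sum_ite_eq' Finset.univ (j ∘ Sum.inr)
      (fun kB => U (i ∘ Sum.inl) (j ∘ Sum.inl) * pauliB f (i ∘ Sum.inr) kB),
    if_pos (Finset.mem_univ _), if_pos (Finset.mem_univ _)]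
lemma pauliStr_linearIndependent {ι : Type*} [Fintype ι] [DecidableEq ι] :
    LinearIndependent ℂ (pauliStr (ι := ι)) := by
  rw [Fintype.linearIndependent_iff]
  intro c hc g
  have h := congrArg (fun N => Matrix.trace (pauliStr g * N)) hc
  rw [trace_pauliStr_sum] at h
  have h2 : ((2:ℂ)^(Fintype.card ι)) ≠ 0 := pow_ne_zero _ two_ne_zero
  simpa [Matrix.mul_zero, Matrix.trace_zero, h2] using h

lemma pauli_card_eq {ι : Type*} [Fintype ι] [DecidableEq ι] :
    Fintype.card (ι → Fin 4) = Module.finrank ℂ (QMat ι) := by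
  rw [Module.finrank_matrix, Fintype.card_fun, Fintype.card_fun]
  simp only [Fintype.card_fin]
  rw [show (4:ℕ) = 2 * 2 by norm_num, mul_pow, Module.finrank_self, mul_one]

noncomputable def pauliBasis (ι : Type*) [Fintype ι] [DecidableEq ι] :
    Module.Basis (ι → Fin 4) ℂ (QMat ι) :=
  basisOfLinearIndependentOfCardEqFinrank pauliStr_linearIndependent pauli_card_eq

lemma pauliBasis_repr (ι : Type*) [Fintype ι] [DecidableEq ι] (N : QMat ι) :
    N = ∑ f, (pauliBasis ι).repr N f • pauliStr f := by
  have h := Module.Basis.sum_repr (pauliBasis ι) N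
  have hb : ∀ f : ι → Fin 4, (pauliBasis ι) f = pauliStr f := fun f =>
    congrFun (coe_basisOfLinearIndependentOfCardEqFinrank
      pauliStr_linearIndependent pauli_card_eq) f
  calc N = ∑ f, (pauliBasis ι).repr N f • (pauliBasis ι) f := h.symm
    _ = ∑ f, (pauliBasis ι).repr N f • pauliStr f :=
        Finset.sum_congr rfl fun f _ => by rw [hb f]
lemma depolA_smul {nA nB : ℕ} (p : ℝ) (z : ℂ) (A : QMat (Fin nA ⊕ Fin nB)) :
    depolA p (z • A) = z • depolA p A := by
  rw [depolA, depolA, foldl_depolQ_smul]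

lemma frobNorm_pauli_sum {nA nB : ℕ} (c : (Fin nA ⊕ Fin nB → Fin 4) → ℂ) :
    frobNorm (∑ f, c f • pauliStr f)
      = Real.sqrt (2^(Fintype.card (Fin nA ⊕ Fin nB)) * ∑ f, Complex.normSq (c f)) := by
  rw [frobNorm, parseval]

lemma layer_bound {nA nB : ℕ} {p : ℝ} (hp0 : 0 ≤ p) (hp1 : p ≤ 1) (V : QMat (Fin nA))
    (hV : V ∈ Matrix.unitaryGroup (Fin nA → Fin 2) ℂ)
    (c : (Fin nA ⊕ Fin nB → Fin 4) → ℂ)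
    (hc : ∀ f, c f ≠ 0 → ∃ a : Fin nA, f (Sum.inl a) ≠ 0) :
    ∃ c' : (Fin nA ⊕ Fin nB → Fin 4) → ℂ,
      (∀ f, c' f ≠ 0 → ∃ a : Fin nA, f (Sum.inl a) ≠ 0) ∧
      depolA p (extA V * (∑ f, c f • pauliStr f) * (extA V : QMat (Fin nA ⊕ Fin nB))ᴴ)
        = ∑ f, c' f • pauliStr f ∧
      frobNorm (depolA p (extA V * (∑ f, c f • pauliStr f)
          * (extA V : QMat (Fin nA ⊕ Fin nB))ᴴ))
        ≤ (1 - p) * frobNorm (∑ f, c f • pauliStr f) := by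
  have hVsV : Vᴴ * V = 1 := by
    rw [← Matrix.star_eq_conjTranspose]; exact hV.1
  have hVVs : V * Vᴴ = 1 := by
    rw [← Matrix.star_eq_conjTranspose]; exact hV.2
  set N : QMat (Fin nA ⊕ Fin nB) := ∑ f, c f • pauliStr f with hN
  set W : QMat (Fin nA ⊕ Fin nB) := extA V with hW
  have hWsW : Wᴴ * W = 1 := by
    rw [hW, extA_conjTranspose, extA_mul, hVsV, extA_one]
  have hWWs : W * Wᴴ = 1 := by
    rw [hW, extA_conjTranspose, extA_mul, hVVs, extA_one]
  set N' : QMat (Fin nA ⊕ Fin nB) := W * N * Wᴴ with hN'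
  set c₁ : (Fin nA ⊕ Fin nB → Fin 4) → ℂ :=
    fun f => (pauliBasis (Fin nA ⊕ Fin nB)).repr N' f with hc₁
  have hrepr : N' = ∑ f, c₁ f • pauliStr f := pauliBasis_repr _ N'
  -- trace identity
  have htr : ∀ g : Fin nA ⊕ Fin nB → Fin 4, (∀ a, g (Sum.inl a) = 0) →
      Matrix.trace (pauliStr g * N') = Matrix.trace (pauliStr g * N) := by
    intro g hg
    rw [hN', ← Matrix.mul_assoc, ← Matrix.mul_assoc, hW,
      ← extA_comm_pauliStr V hg, ← hW]
    rw [Matrix.mul_assoc (W * pauliStr g), Matrix.trace_mul_cycle,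
      Matrix.mul_assoc N Wᴴ W, hWsW, Matrix.mul_one, Matrix.trace_mul_comm]
  have hc₁' : ∀ f, c₁ f ≠ 0 → ∃ a : Fin nA, f (Sum.inl a) ≠ 0 := by
    intro f hf
    by_contra hcon
    push_neg at hcon
    have h2 : ((2:ℂ)^(Fintype.card (Fin nA ⊕ Fin nB))) ≠ 0 := pow_ne_zero _ two_ne_zero
    have e1 : Matrix.trace (pauliStr f * N') = (2:ℂ)^(Fintype.card (Fin nA ⊕ Fin nB)) * c₁ f := by
      conv_lhs => rw [hrepr]
      exact trace_pauliStr_sum c₁ f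
    have hcf : c f = 0 := by
      by_contra hcf
      obtain ⟨a, ha⟩ := hc f hcf
      exact ha (hcon a)
    have e2 : Matrix.trace (pauliStr f * N) = 0 := by
      rw [hN, trace_pauliStr_sum, hcf, mul_zero]
    rw [htr f hcon, e2] at e1
    exact hf (by simpa [h2] using e1.symm)
  -- apply depolA
  have hdep : depolA p N' = ∑ f, (((dR p f : ℝ) : ℂ) * c₁ f) • pauliStr f := by
    rw [hrepr, depolA_sum]
    exact Finset.sum_congr rfl fun f _ => by
      rw [depolA_smul, depolA_pauliStr, smul_smul, mul_comm]
  refine ⟨fun f => ((dR p f : ℝ) : ℂ) * c₁ f, ?_, hdep, ?_⟩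
  · intro f hf
    apply hc₁' f
    intro h0
    apply hf
    show ((dR p f : ℝ) : ℂ) * c₁ f = 0
    rw [h0, mul_zero]
  -- norm bound
  · rw [hdep, frobNorm_pauli_sum]
    have hNn : frobNorm N' = frobNorm N := by
      have key : N'ᴴ * N' = W * (Nᴴ * N) * Wᴴ := by
        rw [hN']
        simp only [Matrix.conjTranspose_mul, Matrix.conjTranspose_conjTranspose,
          Matrix.mul_assoc]
        rw [← Matrix.mul_assoc Wᴴ W, hWsW, Matrix.one_mul]
      rw [frobNorm, frobNorm, key, Matrix.trace_mul_cycle, ← Matrix.mul_assoc, hWsW,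
        Matrix.one_mul]
    have hterm : ∀ f, Complex.normSq (((dR p f : ℝ) : ℂ) * c₁ f)
        ≤ (1 - p)^2 * Complex.normSq (c₁ f) := by
      intro f
      rw [Complex.normSq_mul, Complex.normSq_ofReal]
      by_cases h : c₁ f = 0
      · rw [h]; simp
      · have hle := dR_le hp0 hp1 (hc₁' f h)
        have hge := dR_nonneg hp1 f
        have : dR p f * dR p f ≤ (1 - p)^2 := by nlinarith
        nlinarith [Complex.normSq_nonneg (c₁ f)]
    calc Real.sqrt (2^(Fintype.card (Fin nA ⊕ Fin nB))
            * ∑ f, Complex.normSq (((dR p f : ℝ) : ℂ) * c₁ f))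
        ≤ Real.sqrt ((1 - p)^2 * (2^(Fintype.card (Fin nA ⊕ Fin nB))
            * ∑ f, Complex.normSq (c₁ f))) := by
          apply Real.sqrt_le_sqrt
          have hsum : ∑ f, Complex.normSq (((dR p f : ℝ) : ℂ) * c₁ f)
              ≤ (1 - p)^2 * ∑ f, Complex.normSq (c₁ f) := by
            rw [Finset.mul_sum]
            exact Finset.sum_le_sum fun f _ => hterm f
          have h2n : (0:ℝ) ≤ 2^(Fintype.card (Fin nA ⊕ Fin nB)) := by positivity
          nlinarith
      _ = (1 - p) * Real.sqrt (2^(Fintype.card (Fin nA ⊕ Fin nB))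
            * ∑ f, Complex.normSq (c₁ f)) := by
          rw [Real.sqrt_mul (sq_nonneg _), Real.sqrt_sq (by linarith)]
      _ = (1 - p) * frobNorm N' := by rw [hrepr, frobNorm_pauli_sum]
      _ = (1 - p) * frobNorm N := by rw [hNn]
lemma frobNorm_nonneg {m : Type*} [Fintype m] (A : Matrix m m ℂ) : 0 ≤ frobNorm A :=
  Real.sqrt_nonneg _

lemma foldl_layers_bound {nA nB L : ℕ} {p : ℝ} (hp0 : 0 ≤ p) (hp1 : p ≤ 1)
    (U : Fin L → QMat (Fin nA))
    (hU : ∀ k, U k ∈ Matrix.unitaryGroup (Fin nA → Fin 2) ℂ)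
    (l : List (Fin L)) :
    ∀ c : (Fin nA ⊕ Fin nB → Fin 4) → ℂ,
      (∀ f, c f ≠ 0 → ∃ a : Fin nA, f (Sum.inl a) ≠ 0) →
      frobNorm (l.foldl
          (fun B (k : Fin L) =>
            depolA p (extA (U k) * B * (extA (U k) : QMat (Fin nA ⊕ Fin nB))ᴴ))
          (∑ f, c f • pauliStr f))
        ≤ (1 - p) ^ l.length * frobNorm (∑ f, c f • pauliStr f) := by
  induction l with
  | nil => intro c hc; simp
  | cons k t ih =>
    intro c hc
    obtain ⟨c', hc', heq, hbound⟩ := layer_bound hp0 hp1 (U k) (hU k) c hc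
    rw [List.foldl_cons, heq]
    calc frobNorm (t.foldl _ (∑ f, c' f • pauliStr f))
        ≤ (1 - p) ^ t.length * frobNorm (∑ f, c' f • pauliStr f) := ih c' hc'
      _ ≤ (1 - p) ^ t.length * ((1 - p) * frobNorm (∑ f, c f • pauliStr f)) := by
          apply mul_le_mul_of_nonneg_left _ (pow_nonneg (by linarith) _)
          rw [← heq]
          exact hbound
      _ = (1 - p) ^ (k :: t).length * frobNorm (∑ f, c f • pauliStr f) := by
          rw [List.length_cons, pow_succ]
          ring

/-- For `L` noisy unitary layers on subsystem `A` (local depolarizing noise with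
probability `p` interleaved between unitary layers), any traceless operator `M` that is
a linear combination of Pauli strings acting nontrivially on `A` contracts as
`‖(Ũ ⊗ I_B)(M)‖₂ ≤ (1−p)^L ‖M‖₂`. -/
theorem noisy_layers_contraction (nA nB L : ℕ) (p : ℝ) (hp0 : 0 ≤ p) (hp1 : p ≤ 1)
    (U : Fin L → QMat (Fin nA))
    (hU : ∀ k, U k ∈ Matrix.unitaryGroup (Fin nA → Fin 2) ℂ)
    (c : (Fin nA ⊕ Fin nB → Fin 4) → ℂ)
    (hc : ∀ f, c f ≠ 0 → ∃ a : Fin nA, f (Sum.inl a) ≠ 0)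
    (M : QMat (Fin nA ⊕ Fin nB)) (hM : M = ∑ f, c f • pauliStr f)
    (hMtr : Matrix.trace M = 0) :
    frobNorm (tildeU (nB := nB) p U M) ≤ (1 - p) ^ L * frobNorm M := by
  subst hM
  rw [tildeU]
  have := foldl_layers_bound (nB := nB) hp0 hp1 U hU (List.finRange L) c hc
  rwa [List.length_finRange] at this
end
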